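/- arXiv:1009.0704 — 2 statements merged into one kernel-verified Lean document; each statement's English description precedes it below -/
import Mathlib

section
/- For pairwise distinct elements d_1,…,d_c and fixed index l, the partial fraction identity ∑_{i≠l} (1/∏_{i'≠i}(d_i − d_{i'})) · 1/(d_l − d_i) = −(1/∏_{l'≠l}(d_l − d_{l'})) · ∑_{i≠l} 1/(d_l − d_i) holds. -/
open Finset Polynomial

private theorem derivative_finset_prod' {R : Type*} [CommSemiring R] {ι : Type*} [DecidableEq ι]
    (t : Finset ι) (f : ι → Polynomial R) :
    Polynomial.derivative (∏ b ∈ t, f b) =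
      ∑ b ∈ t, (∏ a ∈ t.erase b, f a) * Polynomial.derivative (f b) := by
  induction t using Finset.induction_on with
  | empty => simp
  | insert a u ha ih =>
    have hsum : ∑ b ∈ u, f a * ((∏ x ∈ u.erase b, f x) * Polynomial.derivative (f b))
        = ∑ b ∈ u, (∏ x ∈ (insert a u).erase b, f x) * Polynomial.derivative (f b) := by
      refine Finset.sum_congr rfl fun b hb => ?_
      have hba : b ≠ a := fun e => ha (e ▸ hb)
      rw [Finset.erase_insert_of_ne hba.symm,
        Finset.prod_insert (fun h => ha (Finset.mem_of_mem_erase h))]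
      ring
    rw [Finset.prod_insert ha, Polynomial.derivative_mul, Finset.sum_insert ha,
      Finset.erase_insert ha, ih, Finset.mul_sum, hsum]
    ring

/-- Partial fraction identity: for pairwise distinct `d_1,…,d_c` in a field and a fixed index `l`,
`∑_{i≠l} (1/∏_{i'≠i}(d_i - d_{i'})) · 1/(d_l - d_i)
  = -(1/∏_{l'≠l}(d_l - d_{l'})) · ∑_{i≠l} 1/(d_l - d_i)`. -/
theorem stmt4 {K : Type*} [Field K] (c : ℕ) (hc : 2 ≤ c) (d : Fin c → K)
    (hd : Function.Injective d) (l : Fin c) :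
    ∑ i ∈ Finset.univ.erase l,
        (∏ i' ∈ Finset.univ.erase i, (d i - d i'))⁻¹ * (d l - d i)⁻¹ =
      -(∏ l' ∈ Finset.univ.erase l, (d l - d l'))⁻¹ *
        ∑ i ∈ Finset.univ.erase l, (d l - d i)⁻¹ := by
  classical
  set s : Finset (Fin c) := Finset.univ.erase l with hs_def
  have hls : l ∉ s := Finset.notMem_erase l _
  have hscard : s.card = c - 1 := by
    simp [hs_def, Finset.card_erase_of_mem]
  have hsne : s.Nonempty := by
    rw [← Finset.card_pos, hscard]
    omega
  have hinj : Set.InjOn d s := hd.injOn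
  have hsub : ∀ {i j : Fin c}, i ≠ j → d i - d j ≠ 0 :=
    fun h => sub_ne_zero.2 fun e => h (hd e)
  -- abbreviations
  set a : Fin c → K := fun i => (d l - d i)⁻¹ with ha_def
  set v : Fin c → K := fun i => (∏ j ∈ s.erase i, (d i - d j))⁻¹ with hv_def
  set Pl : K := ∏ j ∈ s, (d l - d j) with hPl_def
  set S : K := ∑ k ∈ s, a k with hS_def
  have hne_l : ∀ i ∈ s, i ≠ l := fun i hi => (Finset.mem_erase.1 hi).1
  have hPl_ne : Pl ≠ 0 :=
    Finset.prod_ne_zero_iff.2 fun j hj => hsub (hne_l j hj).symm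
  -- product over erase in terms of Pl and a
  have hprod_erase : ∀ i ∈ s, ∏ j ∈ s.erase i, (d l - d j) = Pl * a i := by
    intro i hi
    have h := Finset.mul_prod_erase s (fun j => d l - d j) hi
    have hdi : d l - d i ≠ 0 := hsub (hne_l i hi).symm
    rw [hPl_def, ← h, ha_def]
    field_simp
  -- evaluation of Lagrange basis at d l
  have heval_basis : ∀ i ∈ s, (Lagrange.basis s d i).eval (d l) = v i * (Pl * a i) := by
    intro i hi
    rw [Lagrange.basis, eval_prod]
    have : ∀ j ∈ s.erase i, (Lagrange.basisDivisor (d i) (d j)).eval (d l)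
        = (d i - d j)⁻¹ * (d l - d j) := by
      intro j hj
      simp [Lagrange.basisDivisor]
    rw [Finset.prod_congr rfl this, Finset.prod_mul_distrib, hprod_erase i hi,
      Finset.prod_inv_distrib, hv_def]
  -- Identity A
  have hA : ∑ i ∈ s, v i * (Pl * a i) = 1 := by
    have h := Lagrange.sum_basis hinj hsne
    have h2 := congrArg (Polynomial.eval (d l)) h
    rw [Polynomial.eval_finset_sum, Polynomial.eval_one] at h2
    rw [← h2]
    exact (Finset.sum_congr rfl fun i hi => (heval_basis i hi).symm)
  have hA' : ∑ i ∈ s, v i * a i = Pl⁻¹ := by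
    have := congrArg (· * Pl⁻¹) hA
    simp only [Finset.sum_mul, one_mul] at this
    rw [← this]
    refine Finset.sum_congr rfl fun i hi => ?_
    field_simp
  -- evaluation of derivative of Lagrange basis at d l
  have heval_deriv : ∀ i ∈ s,
      (Polynomial.derivative (Lagrange.basis s d i)).eval (d l)
        = v i * Pl * (a i * (S - a i)) := by
    intro i hi
    rw [Lagrange.basis, derivative_finset_prod', Polynomial.eval_finset_sum]
    have hterm : ∀ k ∈ s.erase i,
        (((∏ j ∈ (s.erase i).erase k, Lagrange.basisDivisor (d i) (d j)) *
          Polynomial.derivative (Lagrange.basisDivisor (d i) (d k))).eval (d l))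
        = v i * Pl * (a i * a k) := by
      intro k hk
      have hki : k ≠ i := (Finset.mem_erase.1 hk).1
      have hks : k ∈ s := (Finset.mem_erase.1 hk).2
      have hderiv : Polynomial.derivative (Lagrange.basisDivisor (d i) (d k))
          = Polynomial.C (d i - d k)⁻¹ := by
        simp [Lagrange.basisDivisor]
      rw [Polynomial.eval_mul, hderiv, Polynomial.eval_C, Polynomial.eval_prod]
      have : ∀ j ∈ (s.erase i).erase k, (Lagrange.basisDivisor (d i) (d j)).eval (d l)
          = (d i - d j)⁻¹ * (d l - d j) := by
        intro j hj
        simp [Lagrange.basisDivisor]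
      rw [Finset.prod_congr rfl this, Finset.prod_mul_distrib]
      -- ∏ over (s.erase i).erase k of (d i - d j) times (d i - d k) = (v i)⁻¹
      have h1 : (d i - d k) * ∏ j ∈ (s.erase i).erase k, (d i - d j)
          = ∏ j ∈ s.erase i, (d i - d j) :=
        Finset.mul_prod_erase (s.erase i) (fun j => d i - d j) hk
      -- ∏ over (s.erase i).erase k of (d l - d j) = Pl * a i * a k
      have h2 : (d l - d k) * ∏ j ∈ (s.erase i).erase k, (d l - d j)
          = ∏ j ∈ s.erase i, (d l - d j) :=
        Finset.mul_prod_erase (s.erase i) (fun j => d l - d j) hk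
      have h3 : ∏ j ∈ s.erase i, (d l - d j) = Pl * a i := hprod_erase i hi
      have hdk : d l - d k ≠ 0 := hsub (hne_l k hks).symm
      have hik : d i - d k ≠ 0 := hsub hki.symm
      have hprod_ne : ∏ j ∈ s.erase i, (d i - d j) ≠ 0 :=
        Finset.prod_ne_zero_iff.2 fun j hj =>
          hsub (Finset.mem_erase.1 hj).1.symm
      have h4 : ∏ j ∈ (s.erase i).erase k, (d l - d j) = Pl * a i * a k := by
        have hak : a k = (d l - d k)⁻¹ := rfl
        rw [← h2.trans h3, hak, mul_comm (d l - d k), mul_assoc, mul_inv_cancel₀ hdk, mul_one]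
      have h5 : ∏ x ∈ (s.erase i).erase k, (d i - d x)⁻¹ = (d i - d k) * v i := by
        rw [Finset.prod_inv_distrib, hv_def]
        simp only []
        rw [← h1, mul_inv, ← mul_assoc, mul_inv_cancel₀ hik, one_mul]
      rw [h4, h5, mul_right_comm, mul_comm (d i - d k) (v i), mul_assoc (v i),
        mul_inv_cancel₀ hik, mul_one]
      ring
    have h6 : ∑ k ∈ s.erase i, a k = S - a i := by
      rw [hS_def]
      exact Finset.sum_erase_eq_sub hi
    rw [Finset.sum_congr rfl hterm, ← Finset.mul_sum, ← Finset.mul_sum, h6]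
  -- Identity D
  have hD : ∑ i ∈ s, v i * Pl * (a i * (S - a i)) = 0 := by
    have h := Lagrange.sum_basis hinj hsne
    have h2 := congrArg (fun p => (Polynomial.derivative p).eval (d l)) h
    simp only [map_sum, Polynomial.eval_finset_sum, Polynomial.derivative_one,
      Polynomial.eval_zero] at h2
    rw [← h2]
    exact (Finset.sum_congr rfl fun i hi => (heval_deriv i hi).symm)
  -- derive ∑ v i * a i ^ 2 = S * Pl⁻¹
  have hB : ∑ i ∈ s, v i * a i ^ 2 = S * Pl⁻¹ := by
    have h7 : ∑ i ∈ s, (v i * a i * S - v i * a i ^ 2) = 0 := by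
      have := congrArg (· * Pl⁻¹) hD
      simp only [Finset.sum_mul, zero_mul] at this
      rw [← this]
      refine Finset.sum_congr rfl fun i hi => ?_
      field_simp
    rw [Finset.sum_sub_distrib, sub_eq_zero] at h7
    rw [← h7, ← Finset.sum_mul, hA', mul_comm]
  -- finish: rewrite the goal
  have hgoal_lhs : ∀ i ∈ s,
      (∏ i' ∈ Finset.univ.erase i, (d i - d i'))⁻¹ * (d l - d i)⁻¹
        = -(v i * a i ^ 2) := by
    intro i hi
    have hil : i ≠ l := hne_l i hi
    have hl_mem : l ∈ Finset.univ.erase i := Finset.mem_erase.2 ⟨hil.symm, Finset.mem_univ l⟩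
    have h8 : (d i - d l) * ∏ j ∈ (Finset.univ.erase i).erase l, (d i - d j)
        = ∏ i' ∈ Finset.univ.erase i, (d i - d i') :=
      Finset.mul_prod_erase _ (fun j => d i - d j) hl_mem
    have h9 : (Finset.univ.erase i).erase l = s.erase i := by
      rw [hs_def, Finset.erase_right_comm]
    rw [← h8, h9, hv_def, ha_def]
    have hdi : d i - d l ≠ 0 := hsub hil
    have hdl : d l - d i ≠ 0 := hsub hil.symm
    have hprod_ne : ∏ j ∈ s.erase i, (d i - d j) ≠ 0 :=
      Finset.prod_ne_zero_iff.2 fun j hj =>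
        hsub (Finset.mem_erase.1 hj).1.symm
    have hsub_neg : d i - d l = -(d l - d i) := by ring
    rw [hsub_neg]
    field_simp
  calc ∑ i ∈ s, (∏ i' ∈ Finset.univ.erase i, (d i - d i'))⁻¹ * (d l - d i)⁻¹
      = ∑ i ∈ s, -(v i * a i ^ 2) := Finset.sum_congr rfl hgoal_lhs
    _ = -(S * Pl⁻¹) := by rw [Finset.sum_neg_distrib, hB]
    _ = -Pl⁻¹ * S := by ring
end

section
/- The normalized volume of the polytope Q(c,N,(d_i)) defined by α_i ≥ 0 (1 ≤ i ≤ c), β_j ≥ 0 (0 ≤ j ≤ N) inside the affine space { ∑_i d_i α_i = ∑_j β_j, ∑_i α_i = 1 } ⊂ ℝ^{c+N+1} equals ∑_{l=1}^{c} d_l^{c+N−1} / ∏_{l'≠l}(d_l − d_{l'}), where the volume is normalized so that the unit simplex has measure 1. -/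
open MeasureTheory

open Finset


def Tset (n : ℕ) (r : ℝ) : Set (Fin n → ℝ) := {x | (∀ i, 0 ≤ x i) ∧ ∑ i, x i ≤ r}

def Sset (n : ℕ) (r : ℝ) : Set (ℝ × (Fin n → ℝ)) :=
  {z | 0 ≤ z.1 ∧ (∀ i, 0 ≤ z.2 i) ∧ z.1 + ∑ i, z.2 i ≤ r}

def Lform (n : ℕ) (d : Fin (n + 1) → ℝ) (x : Fin n → ℝ) : ℝ :=
  (∑ i, d i.castSucc * x i) + d (Fin.last n) * (1 - ∑ i, x i)

lemma measurableSet_Tset (n : ℕ) (r : ℝ) : MeasurableSet (Tset n r) := by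
  have h1 : MeasurableSet {x : Fin n → ℝ | ∀ i, 0 ≤ x i} := by
    rw [Set.setOf_forall]
    exact MeasurableSet.iInter fun i => measurableSet_le measurable_const (measurable_pi_apply i)
  have h2 : MeasurableSet {x : Fin n → ℝ | ∑ i, x i ≤ r} :=
    measurableSet_le (Finset.measurable_sum _ fun i _ => measurable_pi_apply i) measurable_const
  exact h1.inter h2

lemma measurableSet_Sset (n : ℕ) (r : ℝ) : MeasurableSet (Sset n r) := by
  have h1 : MeasurableSet {z : ℝ × (Fin n → ℝ) | 0 ≤ z.1} :=
    measurableSet_le measurable_const measurable_fst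
  have h2 : MeasurableSet {z : ℝ × (Fin n → ℝ) | ∀ i, 0 ≤ z.2 i} := by
    rw [Set.setOf_forall]
    exact MeasurableSet.iInter fun i =>
      measurableSet_le measurable_const (by fun_prop : Measurable fun z : ℝ × (Fin n → ℝ) => z.2 i)
  have h3 : MeasurableSet {z : ℝ × (Fin n → ℝ) | z.1 + ∑ i, z.2 i ≤ r} :=
    measurableSet_le (by fun_prop) measurable_const
  exact h1.inter (h2.inter h3)

lemma isCompact_Tset (n : ℕ) (r : ℝ) : IsCompact (Tset n r) := by
  have hsub : Tset n r ⊆ Set.Icc (fun _ => 0) (fun _ => |r|) := by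
    rintro x ⟨hx, hs⟩
    refine ⟨fun i => hx i, fun i => ?_⟩
    calc x i ≤ ∑ j, x j := Finset.single_le_sum (fun j _ => hx j) (mem_univ i)
    _ ≤ r := hs
    _ ≤ |r| := le_abs_self r
  have hclosed : IsClosed (Tset n r) := by
    have h1 : IsClosed {x : Fin n → ℝ | ∀ i, 0 ≤ x i} := by
      rw [Set.setOf_forall]
      exact isClosed_iInter fun i => isClosed_le continuous_const (continuous_apply i)
    have h2 : IsClosed {x : Fin n → ℝ | ∑ i, x i ≤ r} :=
      isClosed_le (by continuity) continuous_const
    exact h1.inter h2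
  exact (isCompact_Icc).of_isClosed_subset hclosed hsub

set_option maxHeartbeats 1000000 in
lemma isCompact_Sset (n : ℕ) (r : ℝ) : IsCompact (Sset n r) := by
  have hsub : Sset n r ⊆ Set.Icc ((0 : ℝ), (fun _ => 0 : Fin n → ℝ)) (|r|, fun _ => |r|) := by
    rintro ⟨t, x⟩ ⟨ht, hx, hs⟩
    have hsx : 0 ≤ ∑ i, x i := Finset.sum_nonneg fun i _ => hx i
    refine ⟨⟨ht, fun i => hx i⟩, ⟨le_trans (by linarith) (le_abs_self r), fun i => ?_⟩⟩
    have : x i ≤ ∑ j, x j := Finset.single_le_sum (fun j _ => hx j) (mem_univ i)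
    exact le_trans (by linarith) (le_abs_self r)
  have hclosed : IsClosed (Sset n r) := by
    have h1 : IsClosed {z : ℝ × (Fin n → ℝ) | 0 ≤ z.1} :=
      isClosed_le continuous_const continuous_fst
    have h2 : IsClosed {z : ℝ × (Fin n → ℝ) | ∀ i, 0 ≤ z.2 i} := by
      rw [Set.setOf_forall]
      exact isClosed_iInter fun i =>
        isClosed_le continuous_const ((continuous_apply i).comp continuous_snd)
    have h3 : IsClosed {z : ℝ × (Fin n → ℝ) | z.1 + ∑ i, z.2 i ≤ r} :=
      isClosed_le (continuous_fst.add (by fun_prop)) continuous_const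
    exact h1.inter (h2.inter h3)
  exact (isCompact_Icc).of_isClosed_subset hclosed hsub

lemma continuous_Lform (n : ℕ) (d : Fin (n + 1) → ℝ) : Continuous (Lform n d) := by
  unfold Lform; continuity

lemma Tset_preimage (n : ℕ) (r : ℝ) :
    Tset (n + 1) r =
      (MeasurableEquiv.piFinSuccAbove (fun _ : Fin (n + 1) => ℝ) (Fin.last n)) ⁻¹' Sset n r := by
  ext x
  have hex : (MeasurableEquiv.piFinSuccAbove (fun _ : Fin (n + 1) => ℝ) (Fin.last n)) x =
      (x (Fin.last n), fun j => x ((Fin.last n).succAbove j)) := rfl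
  simp only [Set.mem_preimage, hex, Sset, Set.mem_setOf_eq, Fin.succAbove_last, Tset]
  constructor
  · rintro ⟨hx, hs⟩
    refine ⟨hx _, fun i => hx _, ?_⟩
    rw [Fin.sum_univ_castSucc] at hs
    linarith
  · rintro ⟨h0, hx, hs⟩
    refine ⟨fun i => ?_, ?_⟩
    · cases i using Fin.lastCases with
      | last => exact h0
      | cast i => exact hx i
    · rw [Fin.sum_univ_castSucc]; linarith

lemma key1 (u x y : ℝ) (hx : x ≠ 0) (hy : y ≠ 0) : u / y = x * (u / (x * y)) := by
  field_simp

lemma key2 (u x y q : ℝ) (hx : x ≠ 0) (hy : y ≠ 0) (hq : q ≠ 0) :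
    u / (x * q) - u / (y * q) = (y - x) * (u / (x * (y * q))) := by
  field_simp

lemma image_succAbove (n : ℕ) (p : Fin (n + 2)) :
    (univ : Finset (Fin (n + 1))).image p.succAbove = univ.erase p := by
  ext a
  simp only [mem_image, mem_univ, true_and, mem_erase, and_true]
  constructor
  · rintro ⟨l, rfl⟩; exact p.succAbove_ne l
  · intro h; exact Fin.exists_succAbove_eq h

lemma dd_reindex (n : ℕ) (d : Fin (n + 2) → ℝ) (p : Fin (n + 2)) (v : Fin (n + 2) → ℝ) :
    ∑ l : Fin (n + 1), v (p.succAbove l) /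
        ∏ l' ∈ univ.erase l, (d (p.succAbove l) - d (p.succAbove l')) =
      ∑ l ∈ univ.erase p, v l / ∏ l' ∈ (univ.erase p).erase l, (d l - d l') := by
  rw [← image_succAbove n p, Finset.sum_image (fun x _ y _ h => p.succAbove_right_injective h)]
  refine Finset.sum_congr rfl fun l _ => ?_
  rw [show ((univ : Finset (Fin (n + 1))).image p.succAbove).erase (p.succAbove l) =
      (univ.erase l).image p.succAbove from
    (Finset.image_erase p.succAbove_right_injective _ _).symm,
    Finset.prod_image (fun x _ y _ h => p.succAbove_right_injective h)]

lemma dd_step (n : ℕ) (d : Fin (n + 2) → ℝ) (hd : Function.Injective d) (v : Fin (n + 2) → ℝ)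
    (a b : Fin (n + 2)) (hab : a ≠ b) :
    (∑ l ∈ univ.erase b, v l / ∏ l' ∈ (univ.erase b).erase l, (d l - d l')) -
      (∑ l ∈ univ.erase a, v l / ∏ l' ∈ (univ.erase a).erase l, (d l - d l')) =
    (d a - d b) * ∑ l, v l / ∏ l' ∈ univ.erase l, (d l - d l') := by
  have hne : ∀ {x y : Fin (n + 2)}, x ≠ y → d x - d y ≠ 0 := fun h => sub_ne_zero_of_ne (hd.ne h)
  have h1 : ∀ c : Fin (n + 2), (∑ l ∈ univ.erase c, v l /
      ∏ l' ∈ (univ.erase c).erase l, (d l - d l')) =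
      ∑ l, (if l = c then 0 else v l / ∏ l' ∈ (univ.erase c).erase l, (d l - d l')) := by
    intro c
    rw [← Finset.sum_erase (univ : Finset (Fin (n + 2))) (a := c) (f := fun l =>
      (if l = c then 0 else v l / ∏ l' ∈ (univ.erase c).erase l, (d l - d l'))) (by simp)]
    exact Finset.sum_congr rfl fun l hl => by rw [if_neg (Finset.ne_of_mem_erase hl)]
  rw [h1 a, h1 b, ← Finset.sum_sub_distrib, Finset.mul_sum]
  refine Finset.sum_congr rfl fun l _ => ?_
  by_cases hla : l = a
  · subst hla
    rw [if_pos rfl, if_neg hab, sub_zero]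
    have hP : ∏ l' ∈ univ.erase l, (d l - d l') =
        (d l - d b) * ∏ l' ∈ (univ.erase b).erase l, (d l - d l') := by
      rw [Finset.erase_right_comm (a := b) (b := l)]
      exact (Finset.mul_prod_erase _ _ (Finset.mem_erase.2 ⟨Ne.symm hab, mem_univ b⟩)).symm
    have hQ : (∏ l' ∈ (univ.erase b).erase l, (d l - d l')) ≠ 0 :=
      Finset.prod_ne_zero_iff.2 fun l' hl' => hne (Ne.symm (Finset.ne_of_mem_erase hl'))
    rw [hP]
    exact key1 _ _ _ (hne hab) hQ
  · by_cases hlb : l = b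
    · subst hlb
      rw [if_pos rfl, if_neg hla, zero_sub]
      have hlna : l ≠ a := fun h => hla h
      have hP : ∏ l' ∈ univ.erase l, (d l - d l') =
          (d l - d a) * ∏ l' ∈ (univ.erase a).erase l, (d l - d l') := by
        rw [Finset.erase_right_comm (a := a) (b := l)]
        exact (Finset.mul_prod_erase _ _ (Finset.mem_erase.2 ⟨Ne.symm hlna, mem_univ a⟩)).symm
      have hQ : (∏ l' ∈ (univ.erase a).erase l, (d l - d l')) ≠ 0 :=
        Finset.prod_ne_zero_iff.2 fun l' hl' => hne (Ne.symm (Finset.ne_of_mem_erase hl'))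
      rw [hP, key1 (v l) (d l - d a) _ (hne hlna) hQ]
      ring
    · rw [if_neg hla, if_neg hlb]
      have hQ : (∏ l' ∈ ((univ.erase l).erase a).erase b, (d l - d l')) ≠ 0 :=
        Finset.prod_ne_zero_iff.2 fun l' hl' => by
          have : l' ≠ l := Finset.ne_of_mem_erase
            (Finset.mem_of_mem_erase (Finset.mem_of_mem_erase hl'))
          exact hne (Ne.symm this)
      have hPb : ∏ l' ∈ (univ.erase b).erase l, (d l - d l') =
          (d l - d a) * ∏ l' ∈ ((univ.erase l).erase a).erase b, (d l - d l') := by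
        rw [Finset.erase_right_comm (a := b) (b := l), Finset.erase_right_comm (a := a) (b := b)]
        exact (Finset.mul_prod_erase _ _ (Finset.mem_erase.2 ⟨hab,
          Finset.mem_erase.2 ⟨fun h => hla h.symm, mem_univ a⟩⟩)).symm
      have hPa : ∏ l' ∈ (univ.erase a).erase l, (d l - d l') =
          (d l - d b) * ∏ l' ∈ ((univ.erase l).erase a).erase b, (d l - d l') := by
        rw [Finset.erase_right_comm (a := a) (b := l)]
        exact (Finset.mul_prod_erase _ _ (Finset.mem_erase.2 ⟨Ne.symm hab,
          Finset.mem_erase.2 ⟨fun h => hlb h.symm, mem_univ b⟩⟩)).symm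
      have hP : ∏ l' ∈ univ.erase l, (d l - d l') =
          (d l - d a) * ((d l - d b) * ∏ l' ∈ ((univ.erase l).erase a).erase b, (d l - d l')) := by
        rw [← Finset.mul_prod_erase (univ.erase l) _
            (Finset.mem_erase.2 ⟨Ne.symm hla, mem_univ a⟩),
          ← Finset.mul_prod_erase ((univ.erase l).erase a) _ (Finset.mem_erase.2 ⟨Ne.symm hab,
            Finset.mem_erase.2 ⟨Ne.symm hlb, mem_univ b⟩⟩)]
      rw [hP, hPa, hPb]
      have hab' : d a - d b = (d l - d b) - (d l - d a) := by ring
      rw [hab']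
      exact key2 _ _ _ _ (hne (Ne.symm (Ne.symm hla))) (hne (Ne.symm (Ne.symm hlb))) hQ

lemma Tset_empty {n : ℕ} {r : ℝ} (hr : r < 0) : Tset n r = ∅ := by
  ext x
  simp only [Tset, Set.mem_setOf_eq, Set.mem_empty_iff_false, iff_false, not_and]
  intro hx hs
  exact absurd (le_trans (Finset.sum_nonneg fun i _ => hx i) hs) (not_le.2 hr)

lemma volume_Tset (n : ℕ) : ∀ r : ℝ, 0 ≤ r →
    volume (Tset n r) = ENNReal.ofReal (r ^ n / n.factorial) := by
  induction n with
  | zero =>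
    intro r hr
    have h : Tset 0 r = Set.univ := by
      ext x; simp [Tset, hr]
    rw [h]
    simp [volume_pi, Measure.pi_univ]
  | succ n ih =>
    intro r hr
    set S₂ : Set (ℝ × (Fin n → ℝ)) :=
      {z | 0 ≤ z.1 ∧ (∀ i, 0 ≤ z.2 i) ∧ z.1 + ∑ i, z.2 i ≤ r} with hS₂def
    have hS₂ : MeasurableSet S₂ := by
      have h1 : MeasurableSet {z : ℝ × (Fin n → ℝ) | 0 ≤ z.1} :=
        measurableSet_le measurable_const measurable_fst
      have h2 : MeasurableSet {z : ℝ × (Fin n → ℝ) | ∀ i, 0 ≤ z.2 i} := by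
        rw [Set.setOf_forall]
        exact MeasurableSet.iInter fun i =>
          measurableSet_le measurable_const (by fun_prop : Measurable fun z : ℝ × (Fin n → ℝ) => z.2 i)
      have h3 : MeasurableSet {z : ℝ × (Fin n → ℝ) | z.1 + ∑ i, z.2 i ≤ r} :=
        measurableSet_le (by fun_prop) measurable_const
      exact h1.inter (h2.inter h3)
    set e := MeasurableEquiv.piFinSuccAbove (fun _ : Fin (n + 1) => ℝ) (Fin.last n) with hedef
    have hmp : MeasurePreserving e := volume_preserving_piFinSuccAbove _ _
    have hpre : Tset (n + 1) r = e ⁻¹' S₂ := by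
      ext x
      have hex : e x = (x (Fin.last n), fun j => x ((Fin.last n).succAbove j)) := rfl
      simp only [Set.mem_preimage, hex, hS₂def, Set.mem_setOf_eq, Fin.succAbove_last, Tset]
      constructor
      · rintro ⟨hx, hs⟩
        refine ⟨hx _, fun i => hx _, ?_⟩
        rw [Fin.sum_univ_castSucc] at hs
        linarith
      · rintro ⟨h0, hx, hs⟩
        refine ⟨fun i => ?_, ?_⟩
        · cases i using Fin.lastCases with
          | last => exact h0
          | cast i => exact hx i
        · rw [Fin.sum_univ_castSucc]; linarith
    rw [hpre, hmp.measure_preimage hS₂.nullMeasurableSet]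
    rw [show (volume : Measure (ℝ × (Fin n → ℝ))) = (volume : Measure ℝ).prod volume from rfl]
    rw [Measure.prod_apply hS₂]
    have hsec : ∀ t : ℝ, volume (Prod.mk t ⁻¹' S₂) =
        Set.indicator (Set.Icc 0 r) (fun t => ENNReal.ofReal ((r - t) ^ n / n.factorial)) t := by
      intro t
      by_cases ht : 0 ≤ t
      · have hsect : Prod.mk t ⁻¹' S₂ = Tset n (r - t) := by
          ext y
          simp only [Set.mem_preimage, hS₂def, Set.mem_setOf_eq, Tset, ht, true_and]
          constructor
          · rintro ⟨hy, hs⟩; exact ⟨hy, by linarith⟩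
          · rintro ⟨hy, hs⟩; exact ⟨hy, by linarith⟩
        rw [hsect]
        by_cases htr : t ≤ r
        · rw [ih _ (by linarith), Set.indicator_of_mem (Set.mem_Icc.2 ⟨ht, htr⟩)]
        · rw [Tset_empty (by linarith), Set.indicator_of_notMem (by simp [ht, htr])]
          simp
      · have : Prod.mk t ⁻¹' S₂ = ∅ := by
          ext y; simp only [Set.mem_preimage, hS₂def, Set.mem_setOf_eq,
            Set.mem_empty_iff_false, iff_false]
          rintro ⟨h, -⟩; exact ht h
        rw [this, Set.indicator_of_notMem (by simp [ht])]
        simp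
    calc ∫⁻ t, volume (Prod.mk t ⁻¹' S₂)
        = ∫⁻ t, Set.indicator (Set.Icc 0 r)
            (fun t => ENNReal.ofReal ((r - t) ^ n / n.factorial)) t := by
          exact lintegral_congr hsec
      _ = ∫⁻ t in Set.Icc 0 r, ENNReal.ofReal ((r - t) ^ n / n.factorial) := by
          rw [lintegral_indicator measurableSet_Icc]
      _ = ENNReal.ofReal (∫ t in Set.Icc 0 r, (r - t) ^ n / n.factorial) := by
          rw [ofReal_integral_eq_lintegral_ofReal]
          · exact (Continuous.integrableOn_Icc (by continuity))
          · exact (ae_restrict_iff' measurableSet_Icc).2 (ae_of_all _ fun t ht => by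
              have : 0 ≤ r - t := by linarith [ht.2]
              positivity)
      _ = ENNReal.ofReal (r ^ (n + 1) / (n + 1).factorial) := by
          congr 1
          rw [MeasureTheory.integral_Icc_eq_integral_Ioc,
            ← intervalIntegral.integral_of_le hr]
          have : (∫ t in (0:ℝ)..r, (r - t) ^ n / n.factorial)
              = (∫ t in (0:ℝ)..r, (r - t) ^ n) / n.factorial := by
            rw [intervalIntegral.integral_div]
          rw [this, intervalIntegral.integral_comp_sub_left (fun s => s ^ n) r]
          simp only [sub_self, sub_zero, integral_pow]
          rw [Nat.factorial_succ]
          push_cast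
          field_simp
          simp

lemma key_integral : ∀ n p : ℕ, ∀ d : Fin (n + 1) → ℝ, Function.Injective d →
    ((n + p).factorial : ℝ) * ∫ x in Tset n 1, (Lform n d x) ^ p =
      (p.factorial : ℝ) * ∑ l, d l ^ (n + p) / ∏ l' ∈ univ.erase l, (d l - d l') := by
  intro n
  induction n with
  | zero =>
    intro p d hd
    have hT : Tset 0 1 = Set.univ := by
      ext x; simp [Tset]
    have hL : ∀ x : Fin 0 → ℝ, Lform 0 d x = d 0 := by
      intro x; simp [Lform]
    rw [hT, Measure.restrict_univ]
    have hint : ∫ x : Fin 0 → ℝ, (Lform 0 d x) ^ p = (d 0) ^ p := by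
      simp only [hL]
      rw [integral_const]
      simp [volume_pi, Measure.pi_univ]
      simp [Measure.real_def, Measure.pi_univ]
    rw [hint]
    simp [Fin.sum_univ_one]
  | succ n ih =>
    intro p d hd
    set a : Fin (n + 2) := (Fin.last n).castSucc with ha
    set b : Fin (n + 2) := Fin.last (n + 1) with hb
    have hab : a ≠ b := by
      rw [ha, hb, Fin.ne_iff_vne]
      simp [Fin.val_last]
    have hBne : d a - d b ≠ 0 := sub_ne_zero_of_ne (hd.ne hab)
    set ea : Fin (n + 1) → ℝ := fun j => d (b.succAbove j) with hea
    set eb : Fin (n + 1) → ℝ := fun j => d (a.succAbove j) with heb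
    have hea_inj : Function.Injective ea := hd.comp Fin.succAbove_right_injective
    have heb_inj : Function.Injective eb := hd.comp Fin.succAbove_right_injective
    have hea_c : ∀ j : Fin (n + 1), ea j = d j.castSucc := by
      intro j; rw [hea]; simp only [hb, Fin.succAbove_last]
    have heb_c : ∀ j : Fin n, eb j.castSucc = d j.castSucc.castSucc := by
      intro j; rw [heb]; simp only; congr 1
      refine Fin.succAbove_of_castSucc_lt _ _ ?_
      rw [ha, Fin.castSucc_lt_castSucc_iff]
      exact Fin.castSucc_lt_last j
    have heb_l : eb (Fin.last n) = d b := by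
      rw [heb]; simp only; congr 1
      rw [Fin.succAbove_of_le_castSucc _ _ (le_of_eq ha), Fin.succ_last, hb]
    have hL1 : ∀ x : Fin (n + 1) → ℝ, Lform (n + 1) d x =
        Lform n eb (fun j => x j.castSucc) + (d a - d b) * x (Fin.last n) := by
      intro x
      unfold Lform
      rw [Fin.sum_univ_castSucc (f := fun i : Fin (n + 1) => d i.castSucc * x i),
        Fin.sum_univ_castSucc (f := fun i : Fin (n + 1) => x i)]
      simp only [heb_c, heb_l, ← ha, ← hb]
      ring
    have hL2 : ∀ y : Fin n → ℝ, Lform n eb y + (d a - d b) * (1 - ∑ i, y i) = Lform n ea y := by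
      intro y
      unfold Lform
      simp only [heb_c, heb_l, hea_c, ← ha, ← hb]
      ring
    set e := MeasurableEquiv.piFinSuccAbove (fun _ : Fin (n + 1) => ℝ) (Fin.last n) with hedef
    have hmp : MeasurePreserving e := volume_preserving_piFinSuccAbove _ _
    set g : ℝ × (Fin n → ℝ) → ℝ := fun z => (Lform n eb z.2 + (d a - d b) * z.1) ^ p with hg
    have hgcont : Continuous g := by
      rw [hg]
      exact (((continuous_Lform n eb).comp continuous_snd).add
        (continuous_const.mul continuous_fst)).pow p
    have hgint : Integrable ((Sset n 1).indicator g) volume :=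
      (integrable_indicator_iff (measurableSet_Sset n 1)).2
        ((hgcont.continuousOn).integrableOn_compact (isCompact_Sset n 1))
    have hIa : IntegrableOn (fun y => (Lform n ea y) ^ (p + 1)) (Tset n 1) volume :=
      (((continuous_Lform n ea).pow (p + 1)).continuousOn).integrableOn_compact
        (isCompact_Tset n 1)
    have hIb : IntegrableOn (fun y => (Lform n eb y) ^ (p + 1)) (Tset n 1) volume :=
      (((continuous_Lform n eb).pow (p + 1)).continuousOn).integrableOn_compact
        (isCompact_Tset n 1)
    have step1 : ∫ x in Tset (n + 1) 1, (Lform (n + 1) d x) ^ p = ∫ z in Sset n 1, g z := by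
      rw [Tset_preimage, ← hedef,
        ← hmp.setIntegral_preimage_emb e.measurableEmbedding g (Sset n 1)]
      refine integral_congr_ae (Filter.Eventually.of_forall fun x => ?_)
      have hex : e x = (x (Fin.last n), fun j => x j.castSucc) := by
        rw [hedef]
        show (x (Fin.last n), fun j => x ((Fin.last n).succAbove j)) = _
        rw [Fin.succAbove_last]
      show Lform (n + 1) d x ^ p = g (e x)
      rw [hex, hg]
      simp only
      rw [hL1 x]
    have step2 : ∫ z in Sset n 1, g z = ∫ y : Fin n → ℝ, ∫ t : ℝ, (Sset n 1).indicator g (t, y) := by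
      rw [← integral_indicator (measurableSet_Sset n 1),
        show (volume : Measure (ℝ × (Fin n → ℝ))) = (volume : Measure ℝ).prod volume from rfl]
      exact integral_prod_symm _ hgint
    have hBp1 : (d a - d b) * ((p : ℝ) + 1) ≠ 0 := mul_ne_zero hBne (by positivity)
    have step4 : ∀ y : Fin n → ℝ, (∫ t : ℝ, (Sset n 1).indicator g (t, y)) =
        (Tset n 1).indicator (fun y => ((Lform n ea y) ^ (p + 1) - (Lform n eb y) ^ (p + 1)) /
          ((d a - d b) * ((p : ℝ) + 1))) y := by
      intro y
      have hfun : (fun t => (Sset n 1).indicator g (t, y)) =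
          Set.indicator {t | (t, y) ∈ Sset n 1} (fun t => g (t, y)) := by
        funext t
        by_cases h : (t, y) ∈ Sset n 1
        · rw [Set.indicator_of_mem h, Set.indicator_of_mem (by exact h)]
        · rw [Set.indicator_of_notMem h, Set.indicator_of_notMem (by exact h)]
      rw [hfun]
      by_cases hy : ∀ i, 0 ≤ y i
      · have hset : {t | (t, y) ∈ Sset n 1} = Set.Icc 0 (1 - ∑ i, y i) := by
          ext t
          constructor
          · rintro ⟨h1, -, h3⟩
            have h3' : t + ∑ i, y i ≤ 1 := h3
            exact Set.mem_Icc.2 ⟨h1, by linarith⟩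
          · intro ht
            rcases Set.mem_Icc.1 ht with ⟨h1, h2⟩
            exact ⟨h1, hy, show t + ∑ i, y i ≤ 1 by linarith⟩
        rw [hset, integral_indicator measurableSet_Icc]
        by_cases hs : ∑ i, y i ≤ 1
        · rw [Set.indicator_of_mem (show y ∈ Tset n 1 from ⟨hy, hs⟩)]
          rw [MeasureTheory.integral_Icc_eq_integral_Ioc,
            ← intervalIntegral.integral_of_le (by linarith : (0:ℝ) ≤ 1 - ∑ i, y i)]
          have hcongr : Set.EqOn (fun t => g (t, y))
              (fun t => ((d a - d b) * t + Lform n eb y) ^ p)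
              (Set.uIcc (0:ℝ) (1 - ∑ i, y i)) := by
            intro t _
            rw [hg]
            simp only
            ring
          rw [intervalIntegral.integral_congr hcongr,
            intervalIntegral.integral_comp_mul_add (fun u => u ^ p) hBne (Lform n eb y),
            integral_pow]
          have hupper : (d a - d b) * (1 - ∑ i, y i) + Lform n eb y = Lform n ea y := by
            rw [← hL2 y]; ring
          rw [hupper]
          have hlower : (d a - d b) * 0 + Lform n eb y = Lform n eb y := by ring
          rw [hlower, smul_eq_mul]
          field_simp
        · rw [Set.indicator_of_notMem (fun hmem => hs hmem.2),
            Set.Icc_eq_empty (not_le.2 (by linarith [not_le.1 hs] : (1:ℝ) - ∑ i, y i < 0)),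
            Measure.restrict_empty, integral_zero_measure]
      · rw [Set.indicator_of_notMem (fun hmem => hy hmem.1)]
        have hset : {t | (t, y) ∈ Sset n 1} = (∅ : Set ℝ) := by
          ext t
          simp only [Set.mem_empty_iff_false, iff_false]
          rintro ⟨-, hcon, -⟩
          exact hy hcon
        rw [hset, Set.indicator_empty, integral_zero]
    have step5 : (∫ y : Fin n → ℝ, (Tset n 1).indicator
          (fun y => ((Lform n ea y) ^ (p + 1) - (Lform n eb y) ^ (p + 1)) /
            ((d a - d b) * ((p : ℝ) + 1))) y) =
        ((∫ y in Tset n 1, (Lform n ea y) ^ (p + 1)) -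
          ∫ y in Tset n 1, (Lform n eb y) ^ (p + 1)) / ((d a - d b) * ((p : ℝ) + 1)) := by
      rw [integral_indicator (measurableSet_Tset n 1), integral_div, integral_sub hIa hIb]
    have hexp : n + (p + 1) = n + 1 + p := by omega
    have hIHa := ih (p + 1) ea hea_inj
    have hIHb := ih (p + 1) eb heb_inj
    rw [hexp] at hIHa hIHb
    have hsa : (∑ l, ea l ^ (n + 1 + p) / ∏ l' ∈ univ.erase l, (ea l - ea l')) =
        ∑ l ∈ univ.erase b, d l ^ (n + 1 + p) / ∏ l' ∈ (univ.erase b).erase l, (d l - d l') := by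
      simp only [hea]
      exact dd_reindex n d b (fun l => d l ^ (n + 1 + p))
    have hsb : (∑ l, eb l ^ (n + 1 + p) / ∏ l' ∈ univ.erase l, (eb l - eb l')) =
        ∑ l ∈ univ.erase a, d l ^ (n + 1 + p) / ∏ l' ∈ (univ.erase a).erase l, (d l - d l') := by
      simp only [heb]
      exact dd_reindex n d a (fun l => d l ^ (n + 1 + p))
    rw [hsa] at hIHa
    rw [hsb] at hIHb
    have hdd := dd_step n d hd (fun l => d l ^ (n + 1 + p)) a b hab
    have hfact : ((p + 1).factorial : ℝ) = ((p : ℝ) + 1) * p.factorial := by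
      rw [Nat.factorial_succ]; push_cast; ring
    rw [step1, step2]
    simp only [step4]
    rw [step5, ← mul_div_assoc, div_eq_iff hBp1]
    linear_combination hIHa - hIHb + ((p + 1).factorial : ℝ) * hdd +
      ((d a - d b) * ∑ l, d l ^ (n + 1 + p) / ∏ l' ∈ univ.erase l, (d l - d l')) * hfact

/-- The polytope `Q(c, N, (d_i))` (with `c = c' + 1`), defined by `α_i ≥ 0` and `β_j ≥ 0`
inside the affine space `{∑_i d_i α_i = ∑_j β_j, ∑_i α_i = 1} ⊂ ℝ^{c+N+1}`, written in the
unimodular affine coordinates `(α_1, …, α_{c-1}, β_1, …, β_N)`; here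
`α_c = 1 - ∑_{i<c} α_i` and `β_0 = ∑_i d_i α_i - ∑_{j≥1} β_j` are determined. -/
def QSet (c' N : ℕ) (d : Fin (c' + 1) → ℝ) : Set ((Fin c' → ℝ) × (Fin N → ℝ)) :=
  {p | (∀ i, 0 ≤ p.1 i) ∧ (∀ j, 0 ≤ p.2 j) ∧ (∑ i, p.1 i) ≤ 1 ∧
    0 ≤ (∑ i, d i.castSucc * p.1 i) + d (Fin.last c') * (1 - ∑ i, p.1 i) - ∑ j, p.2 j}

/-- The normalized volume (unit simplex has measure `1`, i.e. `(c+N-1)!` times Lebesgue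
measure in unimodular coordinates) of the polytope `Q(c,N,(d_i))` equals
`∑_{l=1}^{c} d_l^{c+N-1} / ∏_{l'≠l} (d_l - d_{l'})`.  Here `c = c' + 1 ≥ 1`. -/
theorem stmt5 (c' N : ℕ) (d : Fin (c' + 1) → ℝ) (hd : Function.Injective d)
    (hpos : ∀ l, 0 < d l) :
    (Nat.factorial (c' + N) : ℝ) * (volume (QSet c' N d)).toReal =
      ∑ l : Fin (c' + 1), d l ^ (c' + N) / ∏ l' ∈ Finset.univ.erase l, (d l - d l') := by
  have hL : ∀ x ∈ Tset c' 1, 0 ≤ Lform c' d x := by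
    rintro x ⟨hx, hs⟩
    have h1 : 0 ≤ ∑ i, d i.castSucc * x i :=
      Finset.sum_nonneg fun i _ => mul_nonneg (hpos _).le (hx i)
    have h2 : 0 ≤ d (Fin.last c') * (1 - ∑ i, x i) := mul_nonneg (hpos _).le (by linarith)
    unfold Lform; linarith
  have hQmeas : MeasurableSet (QSet c' N d) := by
    have h1 : MeasurableSet {p : (Fin c' → ℝ) × (Fin N → ℝ) | ∀ i, 0 ≤ p.1 i} := by
      rw [Set.setOf_forall]
      exact MeasurableSet.iInter fun i => measurableSet_le measurable_const
        (by fun_prop : Measurable fun p : (Fin c' → ℝ) × (Fin N → ℝ) => p.1 i)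
    have h2 : MeasurableSet {p : (Fin c' → ℝ) × (Fin N → ℝ) | ∀ j, 0 ≤ p.2 j} := by
      rw [Set.setOf_forall]
      exact MeasurableSet.iInter fun j => measurableSet_le measurable_const
        (by fun_prop : Measurable fun p : (Fin c' → ℝ) × (Fin N → ℝ) => p.2 j)
    have h3 : MeasurableSet {p : (Fin c' → ℝ) × (Fin N → ℝ) | ∑ i, p.1 i ≤ 1} :=
      measurableSet_le (by fun_prop) measurable_const
    have h4 : MeasurableSet {p : (Fin c' → ℝ) × (Fin N → ℝ) |
        0 ≤ (∑ i, d i.castSucc * p.1 i) + d (Fin.last c') * (1 - ∑ i, p.1 i) - ∑ j, p.2 j} :=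
      measurableSet_le measurable_const (by fun_prop)
    exact h1.inter (h2.inter (h3.inter h4))
  have hnn : ∀ x ∈ Tset c' 1, 0 ≤ (Lform c' d x) ^ N / (N.factorial : ℝ) :=
    fun x hx => div_nonneg (pow_nonneg (hL x hx) N) (Nat.cast_nonneg _)
  have hvol : volume (QSet c' N d) =
      ENNReal.ofReal (∫ x in Tset c' 1, (Lform c' d x) ^ N / (N.factorial : ℝ)) := by
    rw [show (volume : Measure ((Fin c' → ℝ) × (Fin N → ℝ))) =
      (volume : Measure (Fin c' → ℝ)).prod volume from rfl, Measure.prod_apply hQmeas]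
    have hsec : ∀ x : Fin c' → ℝ, volume (Prod.mk x ⁻¹' QSet c' N d) =
        Set.indicator (Tset c' 1)
          (fun x => ENNReal.ofReal ((Lform c' d x) ^ N / (N.factorial : ℝ))) x := by
      intro x
      by_cases hx : x ∈ Tset c' 1
      · have hsect : Prod.mk x ⁻¹' QSet c' N d = Tset N (Lform c' d x) := by
          ext β
          constructor
          · rintro ⟨-, hβ, -, h4⟩
            have h4' : 0 ≤ (∑ i, d i.castSucc * x i) +
                d (Fin.last c') * (1 - ∑ i, x i) - ∑ j, β j := h4
            exact ⟨hβ, show ∑ j, β j ≤ Lform c' d x by unfold Lform; linarith⟩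
          · rintro ⟨hβ, hs⟩
            unfold Lform at hs
            exact ⟨hx.1, hβ, hx.2, by linarith⟩
        rw [hsect, volume_Tset N _ (hL x hx), Set.indicator_of_mem hx]
      · have hsect : Prod.mk x ⁻¹' QSet c' N d = ∅ := by
          ext β
          simp only [Set.mem_empty_iff_false, iff_false]
          rintro ⟨h1, -, h3, -⟩
          exact hx ⟨h1, h3⟩
        rw [hsect, Set.indicator_of_notMem hx]
        simp
    rw [lintegral_congr hsec, lintegral_indicator (measurableSet_Tset c' 1),
      ← ofReal_integral_eq_lintegral_ofReal]
    · exact (((continuous_Lform c' d).pow N).div_const _).continuousOn.integrableOn_compact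
        (isCompact_Tset c' 1)
    · exact (ae_restrict_iff' (measurableSet_Tset c' 1)).2 (ae_of_all _ hnn)
  have hintnn : 0 ≤ ∫ x in Tset c' 1, (Lform c' d x) ^ N / (N.factorial : ℝ) :=
    setIntegral_nonneg (measurableSet_Tset c' 1) hnn
  rw [hvol, ENNReal.toReal_ofReal hintnn]
  have hkey := key_integral c' N d hd
  rw [integral_div]
  have hN : (N.factorial : ℝ) ≠ 0 := Nat.cast_ne_zero.2 (Nat.factorial_ne_zero N)
  rw [← mul_div_assoc, div_eq_iff hN]
  linear_combination hkey
end
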